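/- Let (M, d) be a pseudometric space, K a positive integer, μ ∈ M, and μ₁,…,μ_K independent (not necessarily identically distributed) M-valued random elements with max_{i} E[d(μ_i, μ)²] < ∞. Let δ ∈ (0,1) with K = ⌈8 log(1/δ)⌉, and let μ* almost surely minimize ν ↦ min_{I:|I|>K/2} max_{j∈I} d(μ_j, ν). Then P(d(μ*, μ) > 4·√(max_{i=1,…,K} E[d(μ_i, μ)²])) ≤ δ. -/

import Mathlib

open Finset MeasureTheory ProbabilityTheory

/-- The GROS objective: `ν ↦ min_{I ⊆ [K], |I| > K/2} max_{j ∈ I} d(μ_j, ν)`. -/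
noncomputable def grosObj {M : Type*} [PseudoMetricSpace M] (K : ℕ)
    (μs : Fin K → M) (ν : M) : ℝ :=
  ⨅ I : {I : Finset (Fin K) // K < 2 * I.card}, ⨆ j ∈ I.1, dist (μs j) ν

lemma grosAux_bddBelow {M : Type*} [PseudoMetricSpace M] (K : ℕ) (μs : Fin K → M) (ν : M) :
    BddBelow (Set.range fun I : {I : Finset (Fin K) // K < 2 * I.card} =>
      ⨆ j ∈ I.1, dist (μs j) ν) := by
  refine ⟨0, ?_⟩
  rintro x ⟨I, rfl⟩
  exact Real.iSup_nonneg fun j => Real.iSup_nonneg fun _ => dist_nonneg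

lemma grosObj_le {M : Type*} [PseudoMetricSpace M] {K : ℕ} {μs : Fin K → M} {ν : M}
    {I : Finset (Fin K)} (hI : K < 2 * I.card) {b : ℝ} (hb : 0 ≤ b)
    (h : ∀ j ∈ I, dist (μs j) ν ≤ b) : grosObj K μs ν ≤ b := by
  refine le_trans (ciInf_le (grosAux_bddBelow K μs ν) ⟨I, hI⟩) ?_
  exact Real.iSup_le (fun j => Real.iSup_le (fun hj => h j hj) hb) hb

lemma grosObj_attained {M : Type*} [PseudoMetricSpace M] {K : ℕ} (hK : 0 < K)
    (μs : Fin K → M) (ν : M) :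
    ∃ I : Finset (Fin K), K < 2 * I.card ∧
      ∀ j ∈ I, dist (μs j) ν ≤ grosObj K μs ν := by
  have hne : Nonempty {I : Finset (Fin K) // K < 2 * I.card} :=
    ⟨⟨Finset.univ, by simp [Finset.card_univ]; omega⟩⟩
  obtain ⟨I₀, hI₀⟩ := Finite.exists_min
    (fun I : {I : Finset (Fin K) // K < 2 * I.card} => ⨆ j ∈ I.1, dist (μs j) ν)
  refine ⟨I₀.1, I₀.2, fun j hj => ?_⟩
  have h1 : (⨆ j ∈ I₀.1, dist (μs j) ν) ≤ grosObj K μs ν := le_ciInf hI₀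
  refine le_trans ?_ h1
  have hb : BddAbove (Set.range fun j : Fin K => ⨆ _ : j ∈ I₀.1, dist (μs j) ν) :=
    (Set.finite_range _).bddAbove
  calc dist (μs j) ν = ⨆ _ : j ∈ I₀.1, dist (μs j) ν := (ciSup_pos (f := fun _ => dist (μs j) ν) hj).symm
    _ ≤ ⨆ j, ⨆ _ : j ∈ I₀.1, dist (μs j) ν := le_ciSup hb j

lemma key_det {M : Type*} [PseudoMetricSpace M] {K : ℕ} (hK : 0 < K)
    (μs : Fin K → M) (μ0 ν : M) {r : ℝ} (hr : 0 ≤ r)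
    (hmin : ∀ ν' : M, grosObj K μs ν ≤ grosObj K μs ν')
    (hG : K < 2 * (Finset.univ.filter fun i => dist (μs i) μ0 ≤ 2 * r).card) :
    dist ν μ0 ≤ 4 * r := by
  set G := Finset.univ.filter fun i => dist (μs i) μ0 ≤ 2 * r with hGdef
  have h0 : grosObj K μs μ0 ≤ 2 * r :=
    grosObj_le hG (by linarith) (fun j hj => (Finset.mem_filter.mp hj).2)
  have h1 : grosObj K μs ν ≤ 2 * r := le_trans (hmin μ0) h0
  obtain ⟨I₀, hI₀card, hI₀⟩ := grosObj_attained hK μs ν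
  have hinter : (G ∩ I₀).Nonempty := by
    rw [← Finset.card_pos]
    have hu : (G ∪ I₀).card ≤ K := by
      have := Finset.card_le_card (Finset.subset_univ (G ∪ I₀))
      simpa using this
    have := Finset.card_union_add_card_inter G I₀
    omega
  obtain ⟨j, hj⟩ := hinter
  have hjG : dist (μs j) μ0 ≤ 2 * r := (Finset.mem_filter.mp (Finset.mem_inter.mp hj).1).2
  have hjI : dist (μs j) ν ≤ 2 * r := le_trans (hI₀ j (Finset.mem_inter.mp hj).2) h1
  calc dist ν μ0 ≤ dist ν (μs j) + dist (μs j) μ0 := dist_triangle _ _ _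
    _ ≤ 2 * r + 2 * r := by rw [dist_comm]; exact add_le_add hjI hjG
    _ = 4 * r := by ring

/-- Unbalanced version of the sub-Gaussian aggregation theorem: with
`K = ⌈8 log(1/δ)⌉` independent (not necessarily identically distributed)
estimators, `P(d(μ*, μ) > 4√(max_i E[d(μ_i,μ)²])) ≤ δ`. -/
theorem stmt8 {Ω M : Type*} [MeasureSpace Ω] [IsProbabilityMeasure (ℙ : Measure Ω)]
    [PseudoMetricSpace M] [MeasurableSpace M] [BorelSpace M]
    (δ : ℝ) (hδ : δ ∈ Set.Ioo (0 : ℝ) 1)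
    (K : ℕ) (hKδ : K = ⌈8 * Real.log (1 / δ)⌉₊) (hKpos : 0 < K)
    (μ0 : M) (μs : Fin K → Ω → M) (hmeas : ∀ k, Measurable (μs k))
    (hind : iIndepFun μs ℙ)
    (hint : ∀ k, Integrable (fun ω => dist (μs k ω) μ0 ^ 2) ℙ)
    (μstar : Ω → M) (hμstar : Measurable μstar)
    (hmin : ∀ᵐ ω ∂ℙ, ∀ ν : M,
      grosObj K (fun k => μs k ω) (μstar ω) ≤ grosObj K (fun k => μs k ω) ν) :
    ℙ {ω | 4 * Real.sqrt (⨆ i : Fin K, ∫ ω', dist (μs i ω') μ0 ^ 2 ∂ℙ) <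
        dist (μstar ω) μ0} ≤ ENNReal.ofReal δ := by
  classical
  set V := ⨆ i : Fin K, ∫ ω', dist (μs i ω') μ0 ^ 2 ∂ℙ with hV
  set r := Real.sqrt V with hrdef
  have hr0 : 0 ≤ r := Real.sqrt_nonneg _
  have hV0 : 0 ≤ V :=
    Real.iSup_nonneg fun i => integral_nonneg fun ω => sq_nonneg _
  have hr2 : r ^ 2 = V := Real.sq_sqrt hV0
  have hle_sup : ∀ i : Fin K, (∫ ω', dist (μs i ω') μ0 ^ 2 ∂ℙ) ≤ V := by
    intro i; rw [hV]
    exact le_ciSup (Set.finite_range fun i => ∫ ω', dist (μs i ω') μ0 ^ 2 ∂ℙ).bddAbove i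
  -- the bad sets
  set B : Set M := {x | 2 * r < dist x μ0} with hBdef
  have hBmeas : MeasurableSet B :=
    measurableSet_lt measurable_const ((continuous_id.dist continuous_const).measurable)
  set A : Fin K → Set Ω := fun i => μs i ⁻¹' B with hAdef
  have hAmeas : ∀ i, MeasurableSet (A i) := fun i => (hmeas i) hBmeas
  -- Markov: each bad set has probability ≤ 1/4
  have hA_le : ∀ i, (ℙ (A i)).toReal ≤ 1 / 4 := by
    intro i
    rcases eq_or_lt_of_le hr0 with h0 | hpos
    · -- case r = 0
      have hVz : V = 0 := (Real.sqrt_eq_zero hV0).mp h0.symm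
      have hi0 : (∫ ω', dist (μs i ω') μ0 ^ 2 ∂ℙ) = 0 :=
        le_antisymm (hVz ▸ hle_sup i) (integral_nonneg fun ω => sq_nonneg _)
      have hae : (fun ω => dist (μs i ω) μ0 ^ 2) =ᵐ[ℙ] 0 :=
        (integral_eq_zero_iff_of_nonneg (fun ω => sq_nonneg _) (hint i)).mp hi0
      have hnull : ℙ (A i) = 0 := by
        rw [measure_eq_zero_iff_ae_notMem]
        filter_upwards [hae] with ω hω hωA
        have hd : 2 * r < dist (μs i ω) μ0 := hωA
        have : dist (μs i ω) μ0 ^ 2 = 0 := hω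
        nlinarith [dist_nonneg (x := μs i ω) (y := μ0)]
      simp [hnull]
    · -- case 0 < r : Markov's inequality
      have hmark := mul_meas_ge_le_integral_of_nonneg
        (μ := (ℙ : Measure Ω)) (Filter.Eventually.of_forall fun ω => sq_nonneg _)
        (hint i) (4 * r ^ 2)
      have hsub : A i ⊆ {ω | 4 * r ^ 2 ≤ dist (μs i ω) μ0 ^ 2} := by
        intro ω hω
        have hd : 2 * r < dist (μs i ω) μ0 := hω
        have h2r : (0:ℝ) ≤ 2 * r := by linarith
        show 4 * r ^ 2 ≤ dist (μs i ω) μ0 ^ 2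
        nlinarith [mul_le_mul hd.le hd.le h2r dist_nonneg]
      have hmono : (ℙ (A i)).toReal ≤
          (ℙ {ω | 4 * r ^ 2 ≤ dist (μs i ω) μ0 ^ 2}).toReal :=
        ENNReal.toReal_mono (measure_ne_top _ _) (measure_mono hsub)
      have hfin := le_trans hmark (hle_sup i)
      rw [← hr2, measureReal_def] at hfin
      nlinarith [mul_pos hpos hpos]
  -- indicator variables
  set Y : Fin K → Ω → ℝ := fun i => (A i).indicator 1 with hYdef
  have hYmeas : ∀ i, Measurable (Y i) := fun i => measurable_one.indicator (hAmeas i)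
  have hYind : iIndepFun Y ℙ := by
    have hcomp := hind.comp (fun _ => B.indicator (1 : M → ℝ))
      (fun _ => measurable_one.indicator hBmeas)
    have hYeq : Y = fun i => (B.indicator (1 : M → ℝ)) ∘ (μs i) := by
      funext i ω
      by_cases hω : ω ∈ A i
      · simp [hYdef, Set.indicator_of_mem hω, Function.comp,
          Set.indicator_of_mem (Set.mem_preimage.mp hω)]
      · simp [hYdef, Set.indicator_of_notMem hω, Function.comp,
          Set.indicator_of_notMem (fun h => hω (Set.mem_preimage.mpr h))]
    rw [hYeq]
    exact hcomp
  set t := Real.log 3 with htdef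
  have ht0 : 0 ≤ t := Real.log_nonneg (by norm_num)
  have het : Real.exp t = 3 := Real.exp_log (by norm_num)
  -- mgf of each indicator
  have hmgf : ∀ i, mgf (Y i) ℙ t = (Real.exp t - 1) * (ℙ (A i)).toReal + 1 := by
    intro i
    have hfun : (fun ω => Real.exp (t * Y i ω)) =
        fun ω => (Real.exp t - 1) * (A i).indicator 1 ω + 1 := by
      funext ω
      by_cases hω : ω ∈ A i
      · simp [hYdef, Set.indicator_of_mem hω]
      · simp [hYdef, Set.indicator_of_notMem hω]
    have hind_int : Integrable ((A i).indicator (1 : Ω → ℝ)) ℙ :=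
      (integrable_const (1:ℝ)).indicator (hAmeas i)
    rw [mgf, hfun, integral_add (hind_int.const_mul _) (integrable_const 1),
      integral_const_mul, integral_indicator_one (hAmeas i), integral_const]
    simp [measureReal_def]
  have hmgf_le : ∀ i, mgf (Y i) ℙ t ≤ 3 / 2 := by
    intro i
    rw [hmgf i, het]
    have := hA_le i
    have h0 : 0 ≤ (ℙ (A i)).toReal := ENNReal.toReal_nonneg
    linarith
  -- the sum
  set S : Ω → ℝ := ∑ i : Fin K, Y i with hSdef
  have hS_apply : ∀ ω, S ω = ∑ i : Fin K, Y i ω := by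
    intro ω; rw [hSdef]; simp
  have hSmeas : Measurable S := by
    have hfe : S = fun ω => ∑ i : Fin K, Y i ω := funext hS_apply
    rw [hfe]; exact Finset.measurable_sum _ fun i _ => hYmeas i
  have hS_le : ∀ ω, S ω ≤ K := by
    intro ω
    rw [hS_apply]
    calc ∑ i : Fin K, Y i ω ≤ ∑ _i : Fin K, (1:ℝ) :=
          Finset.sum_le_sum fun i _ => Set.indicator_le_self' (fun _ _ => zero_le_one) ω
      _ = K := by simp
  have hS_int : Integrable (fun ω => Real.exp (t * S ω)) ℙ := by
    refine Integrable.mono' (integrable_const (Real.exp (t * K)))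
      ((hSmeas.const_mul t).exp.aestronglyMeasurable)
      (Filter.Eventually.of_forall fun ω => ?_)
    rw [Real.norm_eq_abs, abs_of_pos (Real.exp_pos _)]
    exact Real.exp_le_exp.mpr (mul_le_mul_of_nonneg_left (hS_le ω) ht0)
  -- Chernoff
  have hchern := measure_ge_le_exp_mul_mgf (X := S) (μ := (ℙ : Measure Ω))
    ((K : ℝ) / 2) ht0 hS_int
  rw [hSdef, hYind.mgf_sum hYmeas] at hchern
  have hprod : ∏ i : Fin K, mgf (Y i) ℙ t ≤ (3/2 : ℝ) ^ K := by
    calc ∏ i : Fin K, mgf (Y i) ℙ t ≤ ∏ _i : Fin K, (3/2 : ℝ) :=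
          Finset.prod_le_prod (fun i _ => mgf_nonneg) (fun i _ => hmgf_le i)
      _ = (3/2 : ℝ) ^ K := by simp [div_pow]
  -- numeric bound
  have hKge : 8 * Real.log (1 / δ) ≤ (K : ℝ) := hKδ ▸ Nat.le_ceil _
  have hlog43 : (1:ℝ) / 4 ≤ 2 * Real.log 2 - Real.log 3 := by
    have hexp : Real.exp (1/4) ≤ 4/3 := by
      have h1 := Real.add_one_le_exp (-(1/4) : ℝ)
      rw [Real.exp_neg] at h1
      nlinarith [Real.exp_pos (1/4 : ℝ),
        mul_inv_cancel₀ (ne_of_gt (Real.exp_pos (1/4 : ℝ)))]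
    have h2 : (1:ℝ)/4 ≤ Real.log (4/3) := (Real.le_log_iff_exp_le (by norm_num)).mpr hexp
    have h3 : Real.log (4/3 : ℝ) = Real.log 4 - Real.log 3 :=
      Real.log_div (by norm_num) (by norm_num)
    have h4 : Real.log (4:ℝ) = 2 * Real.log 2 := by
      rw [show (4:ℝ) = 2^2 by norm_num, Real.log_pow]; push_cast; ring
    linarith
  have hnum : Real.exp (-t * ((K:ℝ)/2)) * (3/2 : ℝ) ^ K ≤ δ := by
    have h32 : (3/2 : ℝ) ^ K = Real.exp ((K:ℝ) * Real.log (3/2)) := by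
      rw [Real.exp_nat_mul, Real.exp_log]; norm_num
    rw [h32, ← Real.exp_add, ← Real.exp_log hδ.1]
    apply Real.exp_le_exp.mpr
    have hlog32 : Real.log (3/2 : ℝ) = Real.log 3 - Real.log 2 :=
      Real.log_div (by norm_num) (by norm_num)
    have hloginv : Real.log (1 / δ) = -Real.log δ := by
      rw [one_div, Real.log_inv]
    rw [htdef, hlog32]
    nlinarith [Nat.cast_nonneg (α := ℝ) K]
  -- event inclusion
  have hsubset : ∀ᵐ ω ∂ℙ, ω ∈ {ω | 4 * r < dist (μstar ω) μ0} →
      ω ∈ {ω | (K:ℝ)/2 ≤ S ω} := by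
    filter_upwards [hmin] with ω hω hE
    by_contra hS
    push_neg at hS
    have hScard : S ω = ((Finset.univ.filter fun i : Fin K => ω ∈ A i).card : ℝ) := by
      rw [hS_apply, ← Finset.sum_boole]
      exact Finset.sum_congr rfl fun i _ => by
        by_cases h : ω ∈ A i <;> simp [hYdef, Set.indicator_apply, h]
    have hbad : 2 * (Finset.univ.filter fun i : Fin K => ω ∈ A i).card < K := by
      rw [hScard] at hS
      have h2 : ((2 * (Finset.univ.filter fun i : Fin K => ω ∈ A i).card : ℕ) : ℝ) < (K : ℝ) := by
        push_cast; linarith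
      exact_mod_cast h2
    have hgoodcard : K < 2 * (Finset.univ.filter fun i : Fin K =>
        dist (μs i ω) μ0 ≤ 2 * r).card := by
      have hsplit := Finset.card_filter_add_card_filter_not
        (s := (Finset.univ : Finset (Fin K))) (p := fun i => ω ∈ A i)
      have hcardK : (Finset.univ : Finset (Fin K)).card = K := by simp
      have heq : (Finset.univ.filter fun i : Fin K => ¬ ω ∈ A i) =
          Finset.univ.filter fun i : Fin K => dist (μs i ω) μ0 ≤ 2 * r := by
        apply Finset.filter_congr
        intro i _
        simp only [hAdef, hBdef, Set.mem_preimage, Set.mem_setOf_eq, not_lt]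
      rw [heq] at hsplit
      omega
    exact absurd (key_det hKpos (fun k => μs k ω) μ0 (μstar ω) hr0 hω hgoodcard)
      (not_le.mpr hE)
  have hmeasle : ℙ {ω | 4 * r < dist (μstar ω) μ0} ≤ ℙ {ω | (K:ℝ)/2 ≤ S ω} :=
    measure_mono_ae hsubset
  refine le_trans hmeasle ?_
  rw [← ENNReal.ofReal_toReal (measure_ne_top ℙ {ω | (K:ℝ)/2 ≤ S ω})]
  apply ENNReal.ofReal_le_ofReal
  calc (ℙ {ω | (K:ℝ)/2 ≤ S ω}).toReal
      ≤ Real.exp (-t * ((K:ℝ)/2)) * ∏ i : Fin K, mgf (Y i) ℙ t := hchern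
    _ ≤ Real.exp (-t * ((K:ℝ)/2)) * (3/2:ℝ)^K := by
        exact mul_le_mul_of_nonneg_left hprod (Real.exp_pos _).le
    _ ≤ δ := hnum
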